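/- Let 𝒲 be an efficient removal pattern, let i∈{−1,0,…,p}, and let A∈𝒜_i with κ_i(A) > 0. Then (κ_i^𝒲(A)/κ_i(A))·(g_i(A) − 2^i) ≤ g_i^𝒲(A) + 2^i. -/

import Mathlib

namespace MSTInterdiction

/-- A finite undirected loopless multigraph on vertex type `V` with edge type `E`:
each edge has two distinct endpoints (parallel edges allowed). -/
structure Multigraph (V : Type*) (E : Type*) where
  fst : E → V
  snd : E → V
  loopless : ∀ e, fst e ≠ snd e

variable {V E : Type*}

/-- Adjacency relation using only the edges in `U`. -/
def Multigraph.rel (G : Multigraph V E) (U : Set E) (x y : V) : Prop :=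
  ∃ e ∈ U, (G.fst e = x ∧ G.snd e = y) ∨ (G.fst e = y ∧ G.snd e = x)

/-- The graph `(V, U)` is connected. -/
def Multigraph.Connects (G : Multigraph V E) (U : Set E) : Prop :=
  ∀ x y : V, Relation.EqvGen (G.rel U) x y

/-- `σ(U)`: the number of connected components of `(V, U)`. -/
noncomputable def Multigraph.sigma (G : Multigraph V E) (U : Set E) : ℕ :=
  Nat.card (Quotient (Relation.EqvGen.setoid (G.rel U)))

/-- Total cost (or weight) of a set of edges. -/
noncomputable def setSum (c : E → ℕ) (U : Set E) : ℕ := ∑ᶠ e ∈ U, c e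

/-- `val(U)`: the weight of a minimum spanning tree of `(V, E ∖ U)`, i.e. the minimum
of `∑_{e ∈ T} w e` over `T ⊆ E ∖ U` with `(V, T)` connected. -/
noncomputable def Multigraph.val (G : Multigraph V E) (w : E → ℕ) (U : Set E) : ℕ :=
  sInf {n | ∃ T : Set E, T ⊆ Uᶜ ∧ G.Connects T ∧ setSum w T = n}

/-- `E_{≤ i}`: edges of weight `0` or of weight `2^ℓ` for some natural `ℓ ≤ i`.
In particular `Ele w (-1) = E_{-1}` is the set of edges of weight `0`. -/
def Ele (w : E → ℕ) (i : ℤ) : Set E :=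
  {e | w e = 0 ∨ ∃ ℓ : ℕ, (ℓ : ℤ) ≤ i ∧ w e = 2 ^ ℓ}

/-- The connected component of vertex `v` in the graph `(V, S)`. -/
def Multigraph.component (G : Multigraph V E) (S : Set E) (v : V) : Set V :=
  {u | Relation.EqvGen (G.rel S) v u}

/-- The partition of `V` into the connected components of `(V, S)`. -/
def Multigraph.parts (G : Multigraph V E) (S : Set E) : Set (Set V) :=
  {A | ∃ v : V, A = G.component S v}

/-- Edge `e` has exactly one endpoint in `A`. -/
def Multigraph.oneEnd (G : Multigraph V E) (A : Set V) (e : E) : Prop :=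
  (G.fst e ∈ A ∧ G.snd e ∉ A) ∨ (G.fst e ∉ A ∧ G.snd e ∈ A)

/-- Edge `e` has both endpoints in `A`. -/
def Multigraph.twoEnds (G : Multigraph V E) (A : Set V) (e : E) : Prop :=
  G.fst e ∈ A ∧ G.snd e ∈ A


section Patterns

variable [Fintype V] [Fintype E]

/-- The auxiliary cost `κ_i(A)`: the cost of edges of `U_{≤i} = U ∩ E_{≤i}` with exactly
one endpoint in `A`, plus twice the cost of those with both endpoints in `A`. -/
noncomputable def kappa (G : Multigraph V E) (w c : E → ℕ) (U : Set E)
    (i : ℤ) (A : Set V) : ℕ :=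
  setSum c {e | e ∈ U ∩ Ele w i ∧ G.oneEnd A e}
    + 2 * setSum c {e | e ∈ U ∩ Ele w i ∧ G.twoEnds A e}

/-- The auxiliary impact `g_i(A) = |{D ∈ 𝒜_{−1} : D ⊆ A}| + Σ_{ℓ=0}^{i} 2^ℓ·|{D ∈ 𝒜_ℓ : D ⊆ A}|`,
where `𝒜_ℓ` is the partition of `V` into connected components of `(V, E_{≤ℓ} ∖ U)`. -/
noncomputable def gfun (G : Multigraph V E) (w : E → ℕ) (U : Set E)
    (i : ℤ) (A : Set V) : ℕ :=
  Nat.card {D : Set V | D ∈ G.parts (Ele w (-1) \ U) ∧ D ⊆ A}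
    + ∑ ℓ ∈ Finset.range (i + 1).toNat,
        2 ^ ℓ * Nat.card {D : Set V | D ∈ G.parts (Ele w (ℓ : ℤ) \ U) ∧ D ⊆ A}

/-- A removal pattern: a finite family of tuples `(W, i)` with `i ∈ {−1, …, p−1}`,
`W ∈ 𝒜_i`, and the sets `W` pairwise disjoint. -/
structure IsRemovalPattern (G : Multigraph V E) (w : E → ℕ) (U : Set E) (p : ℕ)
    (𝒲 : Set (Set V × ℤ)) : Prop where
  finite : 𝒲.Finite
  levels : ∀ x ∈ 𝒲, -1 ≤ x.2 ∧ x.2 ≤ (p : ℤ) - 1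
  parts : ∀ x ∈ 𝒲, x.1 ∈ G.parts (Ele w x.2 \ U)
  disjoint : ∀ x ∈ 𝒲, ∀ y ∈ 𝒲, x ≠ y → Disjoint x.1 y.1

/-- The removal set `R(𝒲) = ⋃_{(W,i) ∈ 𝒲} {e ∈ U_{≤i} : exactly one endpoint of e in W}`. -/
def removalSet (G : Multigraph V E) (w : E → ℕ) (U : Set E)
    (𝒲 : Set (Set V × ℤ)) : Set E :=
  {e | ∃ x ∈ 𝒲, e ∈ U ∩ Ele w x.2 ∧ G.oneEnd x.1 e}

/-- `κ_i^𝒲(A) = Σ κ_j(W)` over `(W,j) ∈ 𝒲` with `W ⊆ A` and `j ≤ i`. -/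
noncomputable def kappaW (G : Multigraph V E) (w c : E → ℕ) (U : Set E)
    (𝒲 : Set (Set V × ℤ)) (i : ℤ) (A : Set V) : ℕ :=
  ∑ᶠ x ∈ {x ∈ 𝒲 | x.1 ⊆ A ∧ x.2 ≤ i}, kappa G w c U x.2 x.1

/-- `g_i^𝒲(A) = Σ g_j(W)` over `(W,j) ∈ 𝒲` with `W ⊆ A` and `j ≤ i`. -/
noncomputable def gW (G : Multigraph V E) (w : E → ℕ) (U : Set E)
    (𝒲 : Set (Set V × ℤ)) (i : ℤ) (A : Set V) : ℕ :=
  ∑ᶠ x ∈ {x ∈ 𝒲 | x.1 ⊆ A ∧ x.2 ≤ i}, gfun G w U x.2 x.1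

/-- An *efficient* removal pattern: for every level `i ∈ {0,…,p}` and every `A ∈ 𝒜_i`,
either no member of `𝒲` on a level below `i` is contained in `A`, or all members of `𝒲`
on levels below `i` are contained in `A` and there is a numbering `Q_0, …, Q_{h-1}`
of the children `𝒞_i(A)` by nonincreasing auxiliary efficiency `ρ_{i-1} = g_{i-1}/κ_{i-1}`
(expressed by cross-multiplication, which encodes the convention `ρ = ∞` when `κ = 0`)
and an index `s ≤ h` such that exactly `Q_0, …, Q_{s-1}` belong to `𝒲` on level `i−1`
and every member of `𝒲` on a level `≤ i−2` is contained in `Q_s`. -/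
def IsEfficient (G : Multigraph V E) (w c : E → ℕ) (U : Set E) (p : ℕ)
    (𝒲 : Set (Set V × ℤ)) : Prop :=
  ∀ i : ℤ, 0 ≤ i → i ≤ (p : ℤ) → ∀ A ∈ G.parts (Ele w i \ U),
    (∀ x ∈ 𝒲, x.2 < i → ¬x.1 ⊆ A) ∨
    ((∀ x ∈ 𝒲, x.2 < i → x.1 ⊆ A) ∧
      ∃ (h : ℕ) (Q : Fin h → Set V) (s : ℕ),
        Function.Injective Q ∧
        (∀ D : Set V, (D ∈ G.parts (Ele w (i - 1) \ U) ∧ D ⊆ A) ↔ ∃ k, Q k = D) ∧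
        (∀ j k : Fin h, j ≤ k →
          gfun G w U (i - 1) (Q k) * kappa G w c U (i - 1) (Q j)
            ≤ gfun G w U (i - 1) (Q j) * kappa G w c U (i - 1) (Q k)) ∧
        s ≤ h ∧
        (∀ k : Fin h, (k : ℕ) < s → (Q k, i - 1) ∈ 𝒲) ∧
        (∀ k : Fin h, s ≤ (k : ℕ) → (Q k, i - 1) ∉ 𝒲) ∧
        (∀ x ∈ 𝒲, x.2 ≤ i - 2 → ∃ hs : s < h, x.1 ⊆ Q ⟨s, hs⟩))


set_option linter.unusedSectionVars false

section AuxLemmas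

variable (G : Multigraph V E)

lemma mem_component_self (S : Set E) (v : V) : v ∈ G.component S v :=
  Relation.EqvGen.refl v

lemma component_eq_of_mem {S : Set E} {u v : V} (h : u ∈ G.component S v) :
    G.component S u = G.component S v := by
  ext x
  simp only [Multigraph.component, Set.mem_setOf_eq] at *
  exact ⟨fun hx => Relation.EqvGen.trans _ _ _ h hx,
         fun hx => Relation.EqvGen.trans _ _ _ (Relation.EqvGen.symm _ _ h) hx⟩

lemma parts_nonempty {S : Set E} {A : Set V} (hA : A ∈ G.parts S) : A.Nonempty := by
  obtain ⟨v, rfl⟩ := hA; exact ⟨v, mem_component_self G S v⟩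

lemma parts_subset_eq {S : Set E} {A B : Set V} (hA : A ∈ G.parts S)
    (hB : B ∈ G.parts S) (h : A ⊆ B) : A = B := by
  obtain ⟨v, rfl⟩ := hA; obtain ⟨u, rfl⟩ := hB
  exact component_eq_of_mem G (h (mem_component_self G S v))

lemma parts_disjoint {S : Set E} {A B : Set V} (hA : A ∈ G.parts S)
    (hB : B ∈ G.parts S) (hne : A ≠ B) : Disjoint A B := by
  rw [Set.disjoint_left]
  intro x hxA hxB
  obtain ⟨v, rfl⟩ := hA; obtain ⟨u, rfl⟩ := hB
  exact hne ((component_eq_of_mem G hxA).symm.trans (component_eq_of_mem G hxB))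

lemma component_mono {S T : Set E} (h : S ⊆ T) (v : V) :
    G.component S v ⊆ G.component T v := by
  intro x hx
  exact Relation.EqvGen.mono (r := G.rel S) (p := G.rel T) (fun a b ⟨e, he, hor⟩ => ⟨e, h he, hor⟩) _ _ hx

lemma component_subset_of_mem {S T : Set E} {A : Set V} {v : V}
    (hA : A ∈ G.parts T) (hST : S ⊆ T) (hv : v ∈ A) :
    G.component S v ⊆ A := by
  obtain ⟨u, rfl⟩ := hA
  calc G.component S v ⊆ G.component T v := component_mono G hST v
  _ = G.component T u := component_eq_of_mem G hv

lemma Ele_mono (w : E → ℕ) {j i : ℤ} (h : j ≤ i) : Ele w j ⊆ Ele w i := by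
  rintro e (h0 | ⟨ℓ, hℓ, he⟩)
  · exact Or.inl h0
  · exact Or.inr ⟨ℓ, hℓ.trans h, he⟩

open Classical in
/-- number of endpoints of `e` lying in `A`. -/
noncomputable def nE (A : Set V) (e : E) : ℕ :=
  (if G.fst e ∈ A then 1 else 0) + (if G.snd e ∈ A then 1 else 0)

open Classical in
lemma setSum_eq_sum (c : E → ℕ) [Fintype E] (S : Set E) :
    setSum c S = ∑ e : E, if e ∈ S then c e else 0 := by
  rw [setSum, finsum_mem_eq_finite_toFinset_sum _ (Set.toFinite S)]
  rw [← Finset.sum_filter]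
  apply Finset.sum_congr _ (fun _ _ => rfl)
  ext e
  simp only [Set.Finite.mem_toFinset, Finset.mem_filter, Finset.mem_univ, true_and]

open Classical in
lemma kappa_eq_sum [Fintype E] (w c : E → ℕ) (U : Set E) (i : ℤ) (A : Set V) :
    kappa G w c U i A = ∑ e : E, if e ∈ U ∩ Ele w i then c e * nE G A e else 0 := by
  rw [kappa, setSum_eq_sum, setSum_eq_sum, Finset.mul_sum, ← Finset.sum_add_distrib]
  apply Finset.sum_congr rfl
  intro e _
  by_cases hu : e ∈ U <;> by_cases hel : e ∈ Ele w i <;>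
    by_cases h1 : G.fst e ∈ A <;> by_cases h2 : G.snd e ∈ A <;>
    simp [Multigraph.oneEnd, Multigraph.twoEnds, nE, Set.mem_inter_iff, hu, hel, h1, h2] <;>
    ring

open Classical in
lemma indicator_partition {h : ℕ} {Q : Fin h → Set V} {A : Set V}
    (hdisj : ∀ j k : Fin h, j ≠ k → Disjoint (Q j) (Q k))
    (hsub : ∀ k, Q k ⊆ A) (hcov : ∀ v ∈ A, ∃ k, v ∈ Q k) (x : V) :
    (∑ k : Fin h, if x ∈ Q k then (1:ℕ) else 0) = if x ∈ A then 1 else 0 := by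
  by_cases hx : x ∈ A
  · obtain ⟨k0, hk0⟩ := hcov x hx
    rw [if_pos hx, Finset.sum_eq_single_of_mem k0 (Finset.mem_univ _), if_pos hk0]
    intro j _ hj
    exact if_neg (fun hxj => absurd hk0 (Set.disjoint_left.mp (hdisj j k0 hj) hxj))
  · rw [if_neg hx, Finset.sum_eq_zero]
    intro k _
    exact if_neg (fun hxk => hx (hsub k hxk))

open Classical in
lemma nE_partition {h : ℕ} {Q : Fin h → Set V} {A : Set V}
    (hdisj : ∀ j k : Fin h, j ≠ k → Disjoint (Q j) (Q k))
    (hsub : ∀ k, Q k ⊆ A) (hcov : ∀ v ∈ A, ∃ k, v ∈ Q k) (e : E) :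
    ∑ k : Fin h, nE G (Q k) e = nE G A e := by
  simp only [nE, Finset.sum_add_distrib]
  rw [indicator_partition hdisj hsub hcov, indicator_partition hdisj hsub hcov]

open Classical in
lemma indicator_subadd {t : Finset (Set V × ℤ)} {B : Set V}
    (hdisj : ∀ x ∈ t, ∀ y ∈ t, x ≠ y → Disjoint x.1 y.1)
    (hsub : ∀ x ∈ t, x.1 ⊆ B) (v : V) :
    (∑ x ∈ t, if v ∈ x.1 then (1:ℕ) else 0) ≤ if v ∈ B then 1 else 0 := by
  by_cases hv : v ∈ B
  · rw [if_pos hv, ← Finset.card_filter]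
    refine Finset.card_le_one.mpr (fun a ha b hb => ?_)
    simp only [Finset.mem_filter] at ha hb
    by_contra hne
    exact absurd hb.2 (Set.disjoint_left.mp (hdisj a ha.1 b hb.1 hne) ha.2)
  · rw [if_neg hv]
    exact le_of_eq (Finset.sum_eq_zero fun x hx => if_neg fun hvx => hv (hsub x hx hvx))

open Classical in
lemma sum_kappa_le [Fintype E] (w c : E → ℕ) (U : Set E) (j : ℤ) (B : Set V)
    (t : Finset (Set V × ℤ))
    (hdisj : ∀ x ∈ t, ∀ y ∈ t, x ≠ y → Disjoint x.1 y.1)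
    (hsub : ∀ x ∈ t, x.1 ⊆ B) (hlev : ∀ x ∈ t, x.2 ≤ j) :
    ∑ x ∈ t, kappa G w c U x.2 x.1 ≤ kappa G w c U j B := by
  have h1 : ∀ x ∈ t, kappa G w c U x.2 x.1
      ≤ ∑ e : E, if e ∈ U ∩ Ele w j then c e * nE G x.1 e else 0 := by
    intro x hx
    rw [kappa_eq_sum]
    refine Finset.sum_le_sum (fun e _ => ?_)
    by_cases he : e ∈ U ∩ Ele w x.2
    · rw [if_pos he, if_pos ⟨he.1, Ele_mono w (hlev x hx) he.2⟩]
    · rw [if_neg he]; exact Nat.zero_le _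
  calc ∑ x ∈ t, kappa G w c U x.2 x.1
      ≤ ∑ x ∈ t, ∑ e : E, if e ∈ U ∩ Ele w j then c e * nE G x.1 e else 0 :=
        Finset.sum_le_sum h1
    _ = ∑ e : E, if e ∈ U ∩ Ele w j then c e * ∑ x ∈ t, nE G x.1 e else 0 := by
        rw [Finset.sum_comm]
        refine Finset.sum_congr rfl (fun e _ => ?_)
        by_cases he : e ∈ U ∩ Ele w j
        · simp only [if_pos he, Finset.mul_sum]
        · simp only [if_neg he, Finset.sum_const_zero]
    _ ≤ ∑ e : E, if e ∈ U ∩ Ele w j then c e * nE G B e else 0 := by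
        refine Finset.sum_le_sum (fun e _ => ?_)
        by_cases he : e ∈ U ∩ Ele w j
        · rw [if_pos he, if_pos he]
          refine Nat.mul_le_mul_left _ ?_
          simp only [nE, Finset.sum_add_distrib]
          exact Nat.add_le_add (indicator_subadd hdisj hsub _) (indicator_subadd hdisj hsub _)
        · simp [he]
    _ = kappa G w c U j B := (kappa_eq_sum G w c U j B).symm

open Classical in
lemma sum_kappa_children_le [Fintype E] (w c : E → ℕ) (U : Set E) {i : ℤ} {A : Set V}
    {h : ℕ} {Q : Fin h → Set V}
    (hdisj : ∀ j k : Fin h, j ≠ k → Disjoint (Q j) (Q k))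
    (hsub : ∀ k, Q k ⊆ A) (hcov : ∀ v ∈ A, ∃ k, v ∈ Q k) :
    ∑ k : Fin h, kappa G w c U (i-1) (Q k) ≤ kappa G w c U i A := by
  rw [kappa_eq_sum G w c U i A]
  calc ∑ k : Fin h, kappa G w c U (i-1) (Q k)
      = ∑ e : E, if e ∈ U ∩ Ele w (i-1) then c e * nE G A e else 0 := by
        simp only [fun k : Fin h => kappa_eq_sum G w c U (i-1) (Q k)]
        rw [Finset.sum_comm]
        refine Finset.sum_congr rfl (fun e _ => ?_)
        by_cases he : e ∈ U ∩ Ele w (i-1)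
        · simp only [if_pos he, ← Finset.mul_sum, nE_partition G hdisj hsub hcov]
        · simp only [if_neg he, Finset.sum_const_zero]
    _ ≤ ∑ e : E, if e ∈ U ∩ Ele w i then c e * nE G A e else 0 := by
        refine Finset.sum_le_sum (fun e _ => ?_)
        by_cases he : e ∈ U ∩ Ele w (i-1)
        · rw [if_pos he, if_pos ⟨he.1, Ele_mono w (by omega) he.2⟩]
        · rw [if_neg he]; exact Nat.zero_le _

/-- number of components of level `ℓ` inside `B`. -/
noncomputable def cardP (w : E → ℕ) (U : Set E) (ℓ : ℤ) (B : Set V) : ℕ :=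
  Nat.card {D : Set V | D ∈ G.parts (Ele w ℓ \ U) ∧ D ⊆ B}

lemma gfun_eq_cardP (w : E → ℕ) (U : Set E) (i : ℤ) (A : Set V) :
    gfun G w U i A = cardP G w U (-1) A
      + ∑ ℓ ∈ Finset.range (i + 1).toNat, 2 ^ ℓ * cardP G w U (ℓ : ℤ) A := rfl

open Classical in
lemma cardP_eq_sum [Fintype V] (w : E → ℕ) (U : Set E) (ℓ : ℤ) (B : Set V) :
    cardP G w U ℓ B = ∑ D ∈ (Set.toFinite (G.parts (Ele w ℓ \ U))).toFinset,
      if D ⊆ B then 1 else 0 := by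
  rw [cardP, Nat.card_coe_set_eq,
      Set.ncard_eq_toFinset_card _ (Set.toFinite _), ← Finset.card_filter]
  congr 1
  ext D
  simp only [Set.Finite.mem_toFinset, Set.mem_setOf_eq, Finset.mem_filter]

open Classical in
lemma cardP_partition [Fintype V] (w : E → ℕ) (U : Set E) {ℓ m : ℤ} (hℓ : ℓ ≤ m)
    {A : Set V} {h : ℕ} {Q : Fin h → Set V}
    (hQparts : ∀ k, Q k ∈ G.parts (Ele w m \ U))
    (hdisj : ∀ j k : Fin h, j ≠ k → Disjoint (Q j) (Q k))
    (hsub : ∀ k, Q k ⊆ A) (hcov : ∀ v ∈ A, ∃ k, v ∈ Q k) :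
    ∑ k : Fin h, cardP G w U ℓ (Q k) = cardP G w U ℓ A := by
  simp only [cardP_eq_sum]
  rw [Finset.sum_comm]
  refine Finset.sum_congr rfl (fun D hD => ?_)
  have hDparts : D ∈ G.parts (Ele w ℓ \ U) := by
    simpa [Set.Finite.mem_toFinset] using hD
  by_cases hDA : D ⊆ A
  · obtain ⟨v, rfl⟩ := hDparts
    have hv : v ∈ A := hDA (mem_component_self G _ v)
    obtain ⟨k0, hk0⟩ := hcov v hv
    have hDk0 : G.component (Ele w ℓ \ U) v ⊆ Q k0 :=
      component_subset_of_mem G (hQparts k0)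
        (Set.diff_subset_diff_left (Ele_mono w hℓ)) hk0
    rw [if_pos hDA, Finset.sum_eq_single_of_mem k0 (Finset.mem_univ _), if_pos hDk0]
    intro j _ hj
    refine if_neg (fun hDj => ?_)
    exact absurd hk0
      (Set.disjoint_left.mp (hdisj j k0 hj) (hDj (mem_component_self G _ v)))
  · rw [if_neg hDA, Finset.sum_eq_zero]
    intro k _
    exact if_neg (fun hk => hDA (hk.trans (hsub k)))

lemma cardP_self [Fintype V] (w : E → ℕ) (U : Set E) {i : ℤ} {A : Set V}
    (hA : A ∈ G.parts (Ele w i \ U)) : cardP G w U i A = 1 := by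
  have hset : {D : Set V | D ∈ G.parts (Ele w i \ U) ∧ D ⊆ A} = {A} := by
    ext D
    simp only [Set.mem_setOf_eq, Set.mem_singleton_iff]
    constructor
    · rintro ⟨hD, hDA⟩; exact parts_subset_eq G hD hA hDA
    · rintro rfl; exact ⟨hA, subset_rfl⟩
  rw [cardP, hset, Nat.card_coe_set_eq, Set.ncard_singleton]

lemma gfun_split [Fintype V] (w : E → ℕ) (U : Set E) {i : ℤ} (hi : 0 ≤ i)
    {A : Set V} {h : ℕ} {Q : Fin h → Set V}
    (hA : A ∈ G.parts (Ele w i \ U))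
    (hQparts : ∀ k, Q k ∈ G.parts (Ele w (i-1) \ U))
    (hdisj : ∀ j k : Fin h, j ≠ k → Disjoint (Q j) (Q k))
    (hsub : ∀ k, Q k ⊆ A) (hcov : ∀ v ∈ A, ∃ k, v ∈ Q k) :
    gfun G w U i A = 2 ^ i.toNat + ∑ k : Fin h, gfun G w U (i-1) (Q k) := by
  obtain ⟨n, rfl⟩ : ∃ n : ℕ, i = (n : ℤ) := ⟨i.toNat, (Int.toNat_of_nonneg hi).symm⟩
  simp only [gfun_eq_cardP]
  have hn1 : ((n:ℤ) + 1).toNat = n + 1 := by omega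
  have hn0 : ((n:ℤ) - 1 + 1).toNat = n := by omega
  have hnn : ((n:ℤ)).toNat = n := by omega
  rw [hn1, hn0, hnn, Finset.sum_range_succ, cardP_self G w U hA]
  have e1 : ∑ k : Fin h, cardP G w U (-1) (Q k) = cardP G w U (-1) A :=
    cardP_partition G w U (by omega) hQparts hdisj hsub hcov
  have e2 : ∀ ℓ ∈ Finset.range n,
      (2:ℕ) ^ ℓ * cardP G w U (ℓ:ℤ) A = ∑ k : Fin h, 2 ^ ℓ * cardP G w U (ℓ:ℤ) (Q k) := by
    intro ℓ hℓ
    rw [← Finset.mul_sum,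
        cardP_partition G w U (by simp at hℓ; omega) hQparts hdisj hsub hcov]
  have e3 : ∑ ℓ ∈ Finset.range n, 2 ^ ℓ * cardP G w U (ℓ:ℤ) A
      = ∑ k : Fin h, ∑ ℓ ∈ Finset.range n, 2 ^ ℓ * cardP G w U (ℓ:ℤ) (Q k) := by
    rw [Finset.sum_congr rfl e2, Finset.sum_comm]
  rw [e3, ← e1, Finset.sum_add_distrib]
  ring

/-- The index set of the sums defining `kappaW`/`gW`. -/
def MSet (𝒲 : Set (Set V × ℤ)) (j : ℤ) (B : Set V) : Set (Set V × ℤ) :=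
  {x ∈ 𝒲 | x.1 ⊆ B ∧ x.2 ≤ j}

lemma kappaW_eq [Fintype V] [Fintype E] (w c : E → ℕ) (U : Set E)
    (𝒲 : Set (Set V × ℤ)) (j : ℤ) (B : Set V) :
    kappaW G w c U 𝒲 j B = ∑ᶠ x ∈ MSet 𝒲 j B, kappa G w c U x.2 x.1 := rfl

lemma gW_eq [Fintype V] [Fintype E] (w : E → ℕ) (U : Set E)
    (𝒲 : Set (Set V × ℤ)) (j : ℤ) (B : Set V) :
    gW G w U 𝒲 j B = ∑ᶠ x ∈ MSet 𝒲 j B, gfun G w U x.2 x.1 := rfl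

lemma MSet_of_mem (w : E → ℕ) (U : Set E) {p : ℕ} {𝒲 : Set (Set V × ℤ)}
    (hRP : IsRemovalPattern G w U p 𝒲) {i : ℤ} {A : Set V}
    (hAW : (A, i) ∈ 𝒲) : MSet 𝒲 i A = {(A, i)} := by
  ext x
  constructor
  · rintro ⟨hx𝒲, hxA, hxi⟩
    by_contra hne
    have hd : Disjoint x.1 A := hRP.disjoint x hx𝒲 (A, i) hAW hne
    have hem : x.1 = ∅ := by
      rw [← Set.subset_empty_iff]
      intro v hv
      exact absurd (hxA hv) (Set.disjoint_left.mp hd hv)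
    obtain ⟨v, hv⟩ := parts_nonempty G (hRP.parts x hx𝒲)
    rw [hem] at hv
    exact hv
  · rintro rfl
    exact ⟨hAW, subset_rfl, le_refl _⟩

lemma MSet_trivial (w : E → ℕ) (U : Set E) {p : ℕ} {𝒲 : Set (Set V × ℤ)}
    (hRP : IsRemovalPattern G w U p 𝒲) {i : ℤ} {A : Set V}
    (hA : A ∈ G.parts (Ele w i \ U)) (hAW : (A, i) ∉ 𝒲)
    (hno : ∀ x ∈ 𝒲, x.2 < i → ¬x.1 ⊆ A) : MSet 𝒲 i A = ∅ := by
  ext x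
  simp only [Set.mem_empty_iff_false, iff_false]
  rintro ⟨hx𝒲, hxA, hxi⟩
  rcases lt_or_eq_of_le hxi with h2 | h2
  · exact hno x hx𝒲 h2 hxA
  · have hxparts := hRP.parts x hx𝒲
    rw [h2] at hxparts
    have hx1 : x.1 = A := parts_subset_eq G hxparts hA hxA
    exact hAW (by rw [← Prod.eta x, hx1, h2] at hx𝒲; exact hx𝒲)

lemma goal_trivial [Fintype V] [Fintype E] (w c : E → ℕ) (U : Set E)
    (𝒲 : Set (Set V × ℤ)) (i : ℤ) (A : Set V)
    (hκpos : 0 < kappa G w c U i A)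
    (hM : MSet 𝒲 i A = ∅ ∨ MSet 𝒲 i A = {(A, i)}) :
    (kappaW G w c U 𝒲 i A : ℝ) / (kappa G w c U i A : ℝ)
        * ((gfun G w U i A : ℝ) - (2 : ℝ) ^ i)
      ≤ (gW G w U 𝒲 i A : ℝ) + (2 : ℝ) ^ i := by
  have h2 : (0:ℝ) < (2:ℝ) ^ i := zpow_pos (by norm_num) i
  have hκR : (0:ℝ) < (kappa G w c U i A : ℝ) := by exact_mod_cast hκpos
  rcases hM with hM | hM
  · have hK : kappaW G w c U 𝒲 i A = 0 := by
      rw [kappaW_eq, hM, finsum_mem_empty]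
    rw [hK]
    simp only [Nat.cast_zero, zero_div, zero_mul]
    positivity
  · have hK : kappaW G w c U 𝒲 i A = kappa G w c U i A := by
      rw [kappaW_eq, hM, finsum_mem_singleton]
    have hG : gW G w U 𝒲 i A = gfun G w U i A := by
      rw [gW_eq, hM, finsum_mem_singleton]
    rw [hK, hG, div_self (ne_of_gt hκR), one_mul]
    linarith

open Classical in
lemma sum_fin_split {h s : ℕ} (hs : s < h) (f : Fin h → ℕ) :
    ∑ k : Fin h, f k
      = (∑ k ∈ Finset.univ.filter (fun k : Fin h => (k:ℕ) < s), f k)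
        + f ⟨s, hs⟩
        + ∑ k ∈ Finset.univ.filter (fun k : Fin h => s < (k:ℕ)), f k := by
  rw [← Finset.sum_filter_add_sum_filter_not Finset.univ (fun k : Fin h => (k:ℕ) < s) f]
  rw [add_assoc]
  congr 1
  have hins : Finset.univ.filter (fun k : Fin h => ¬(k:ℕ) < s)
      = insert (⟨s, hs⟩ : Fin h)
          (Finset.univ.filter (fun k : Fin h => s < (k:ℕ))) := by
    ext k
    simp only [Finset.mem_filter, Finset.mem_univ, true_and, Finset.mem_insert, Fin.ext_iff]
    omega
  rw [hins, Finset.sum_insert (by simp)]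

open Classical in
lemma finsum_image_filter {h s : ℕ} (Q : Fin h → Set V)
    (hQinj : Function.Injective Q) (i : ℤ) (F : Set V × ℤ → ℕ) :
    ∑ᶠ x ∈ (fun k : Fin h => (Q k, i-1)) '' {k : Fin h | (k:ℕ) < s}, F x
      = ∑ k ∈ Finset.univ.filter (fun k : Fin h => (k:ℕ) < s), F (Q k, i-1) := by
  rw [finsum_mem_image (fun a _ b _ hab => hQinj (congrArg Prod.fst hab))]
  rw [show {k : Fin h | (k:ℕ) < s}
      = ↑(Finset.univ.filter (fun k : Fin h => (k:ℕ) < s)) by ext k; simp]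
  rw [finsum_mem_coe_finset]

lemma R7_of_IH (κ' gs κs g' : ℕ) (r : ℝ) (hr : 0 < r) (hF6 : κ' ≤ κs)
    (hIH : 0 < κs → (κ':ℝ) / κs * ((gs:ℝ) - r) ≤ (g':ℝ) + r) :
    (κ':ℝ) * gs ≤ ((g':ℝ) + 2*r) * κs := by
  rcases Nat.eq_zero_or_pos κs with h0 | hpos
  · have h0' : κ' = 0 := by omega
    rw [h0, h0']
    norm_num
  · have hκsR : (0:ℝ) < κs := by exact_mod_cast hpos
    have hI := hIH hpos
    rw [div_mul_eq_mul_div, div_le_iff₀ hκsR] at hI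
    have h6 : (κ':ℝ) ≤ κs := by exact_mod_cast hF6
    nlinarith [hI, mul_le_mul_of_nonneg_left h6 (le_of_lt hr)]

lemma key_ineq (a b κs gs A2 B2 κ' g' κA gA KW GW : ℕ) (e : ℝ) (he : 0 < e)
    (hKdec : KW = a + κ')
    (hGdec : GW = b + g')
    (hF1 : a + κs + A2 ≤ κA)
    (hκA : 0 < κA)
    (hgA : (gA : ℝ) = e + ((b:ℝ) + gs + B2))
    (hF6 : κ' ≤ κs)
    (hS1 : gs * a ≤ b * κs)
    (hS2 : B2 * a ≤ b * A2)
    (hS3 : B2 * κs ≤ gs * A2)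
    (hR7 : (κ':ℝ) * gs ≤ ((g':ℝ) + e) * κs) :
    (KW : ℝ) / (κA:ℝ) * ((gA:ℝ) - e) ≤ (GW:ℝ) + e := by
  have hκR : (0:ℝ) < (κA:ℝ) := by exact_mod_cast hκA
  have rS1 : (gs:ℝ) * a ≤ (b:ℝ) * κs := by exact_mod_cast hS1
  have rS2 : (B2:ℝ) * a ≤ (b:ℝ) * A2 := by exact_mod_cast hS2
  have rS3 : (B2:ℝ) * κs ≤ (gs:ℝ) * A2 := by exact_mod_cast hS3
  have rF6 : (κ':ℝ) ≤ (κs:ℝ) := by exact_mod_cast hF6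
  have rF1 : (a:ℝ) + κs + A2 ≤ (κA:ℝ) := by exact_mod_cast hF1
  rw [div_mul_eq_mul_div, div_le_iff₀ hκR, hgA, hKdec, hGdec]
  push_cast
  have hsimp : e + ((b:ℝ) + gs + B2) - e = (b:ℝ) + gs + B2 := by ring
  rw [hsimp]
  have key2 : ((a:ℝ) + κ') * ((b:ℝ) + gs + B2)
      ≤ ((b:ℝ) + g' + e) * ((a:ℝ) + κs + A2) := by
    rcases eq_or_lt_of_le (show (0:ℝ) ≤ (κs:ℝ) from Nat.cast_nonneg _) with h0 | hκsR
    · have hκs0 : (κs:ℝ) = 0 := h0.symm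
      have hκ'0 : (κ':ℝ) = 0 := by
        have h1 : κs = 0 := by exact_mod_cast hκs0
        have h2 : κ' = 0 := by omega
        exact_mod_cast h2
      have hgsa : (gs:ℝ) * a = 0 := by
        have h1 : (gs:ℝ) * a ≤ 0 := by
          calc (gs:ℝ) * a ≤ (b:ℝ) * κs := rS1
          _ = 0 := by rw [hκs0, mul_zero]
        have h2 : (0:ℝ) ≤ (gs:ℝ) * a := by positivity
        linarith
      rw [hκ'0, hκs0]
      nlinarith [rS2, he, hgsa,
        mul_nonneg (by positivity : (0:ℝ) ≤ (g':ℝ)) (by positivity : (0:ℝ) ≤ (a:ℝ)),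
        mul_nonneg (by positivity : (0:ℝ) ≤ (g':ℝ)) (by positivity : (0:ℝ) ≤ (A2:ℝ)),
        mul_nonneg (le_of_lt he) (by positivity : (0:ℝ) ≤ (a:ℝ)),
        mul_nonneg (le_of_lt he) (by positivity : (0:ℝ) ≤ (A2:ℝ))]
    · by_contra hlt
      push_neg at hlt
      have hP1 : (0:ℝ) ≤ ((b:ℝ)*κs - gs*a) * ((κs:ℝ) - κ') :=
        mul_nonneg (by linarith) (by linarith)
      have hP2 : (0:ℝ) ≤ (((g':ℝ)+e)*κs - κ'*gs) * ((a:ℝ) + κs + A2) :=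
        mul_nonneg (by linarith) (by positivity)
      have hP3 : (0:ℝ) ≤ ((b:ℝ)*A2 - B2*a) * κs :=
        mul_nonneg (by linarith) (Nat.cast_nonneg _)
      have hP4 : (0:ℝ) ≤ ((gs:ℝ)*A2 - B2*κs) * κ' :=
        mul_nonneg (by linarith) (Nat.cast_nonneg _)
      have hsum : (κs:ℝ) * ((((b:ℝ) + g' + e) * ((a:ℝ) + κs + A2))
            - (((a:ℝ) + κ') * ((b:ℝ) + gs + B2)))
          = ((b:ℝ)*κs - gs*a) * ((κs:ℝ) - κ')
            + (((g':ℝ)+e)*κs - κ'*gs) * ((a:ℝ) + κs + A2)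
            + ((b:ℝ)*A2 - B2*a) * κs
            + ((gs:ℝ)*A2 - B2*κs) * κ' := by ring
      have h4 : (0:ℝ) ≤ (κs:ℝ) * ((((b:ℝ) + g' + e) * ((a:ℝ) + κs + A2))
            - (((a:ℝ) + κ') * ((b:ℝ) + gs + B2))) := by
        rw [hsum]; linarith
      have h5 : (0:ℝ) < (κs:ℝ) * ((((a:ℝ) + κ') * ((b:ℝ) + gs + B2))
            - (((b:ℝ) + g' + e) * ((a:ℝ) + κs + A2))) :=
        mul_pos hκsR (by linarith)
      have h6 : (κs:ℝ) * ((((a:ℝ) + κ') * ((b:ℝ) + gs + B2))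
            - (((b:ℝ) + g' + e) * ((a:ℝ) + κs + A2)))
          = -((κs:ℝ) * ((((b:ℝ) + g' + e) * ((a:ℝ) + κs + A2))
            - (((a:ℝ) + κ') * ((b:ℝ) + gs + B2)))) := by ring
      rw [h6] at h5
      linarith
  calc ((a:ℝ) + κ') * ((b:ℝ) + gs + B2)
      ≤ ((b:ℝ) + g' + e) * ((a:ℝ) + κs + A2) := key2
    _ ≤ ((b:ℝ) + g' + e) * κA := by
        have hbge : (0:ℝ) ≤ (b:ℝ) + g' + e := by positivity
        have := mul_nonneg hbge (by linarith : (0:ℝ) ≤ (κA:ℝ) - ((a:ℝ) + κs + A2))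
        nlinarith [this]

lemma key_ineq_full (a b κA gA KW GW : ℕ) (e : ℝ) (he : 0 < e)
    (hKdec : KW = a) (hGdec : GW = b) (hF1 : a ≤ κA) (hκA : 0 < κA)
    (hgA : (gA:ℝ) = e + (b:ℝ)) :
    (KW : ℝ) / (κA:ℝ) * ((gA:ℝ) - e) ≤ (GW:ℝ) + e := by
  have hκR : (0:ℝ) < (κA:ℝ) := by exact_mod_cast hκA
  have rF1 : (a:ℝ) ≤ (κA:ℝ) := by exact_mod_cast hF1
  rw [div_mul_eq_mul_div, div_le_iff₀ hκR, hgA, hKdec, hGdec]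
  have hsimp : e + (b:ℝ) - e = (b:ℝ) := by ring
  rw [hsimp]
  nlinarith [rF1, he, mul_le_mul_of_nonneg_left rF1 (by positivity : (0:ℝ) ≤ (b:ℝ)),
    mul_nonneg (le_of_lt he) (by positivity : (0:ℝ) ≤ (κA:ℝ))]

end AuxLemmas

/-- For an efficient removal pattern `𝒲`, every level
`i ∈ {−1,…,p}` and every `A ∈ 𝒜_i` with `κ_i(A) > 0`:
`(κ_i^𝒲(A)/κ_i(A))·(g_i(A) − 2^i) ≤ g_i^𝒲(A) + 2^i`
(real arithmetic; for `i = −1`, `2^i` denotes `1/2`). -/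
theorem kappa_ratio_bound
    (G : Multigraph V E) (w : E → ℕ) (c : E → ℕ) (hc : ∀ e, 0 < c e)
    (p : ℕ) (hp : 1 ≤ p)
    (hw : ∀ e, w e = 0 ∨ ∃ i ≤ p, w e = 2 ^ i)
    (hEp : G.Connects {e | w e = 2 ^ p})
    (U : Set E) (hU : U ⊆ Ele w ((p : ℤ) - 1))
    (𝒲 : Set (Set V × ℤ))
    (hRP : IsRemovalPattern G w U p 𝒲)
    (hEff : IsEfficient G w c U p 𝒲)
    (i : ℤ) (hil : -1 ≤ i) (hiu : i ≤ (p : ℤ))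
    (A : Set V) (hA : A ∈ G.parts (Ele w i \ U))
    (hκ : 0 < kappa G w c U i A) :
    (kappaW G w c U 𝒲 i A : ℝ) / (kappa G w c U i A : ℝ)
        * ((gfun G w U i A : ℝ) - (2 : ℝ) ^ i)
      ≤ (gW G w U 𝒲 i A : ℝ) + (2 : ℝ) ^ i := by
  classical
  have H : ∀ m : ℕ, ∀ i : ℤ, i + 1 = (m : ℤ) → i ≤ (p : ℤ) →
      ∀ A ∈ G.parts (Ele w i \ U), 0 < kappa G w c U i A →
      (kappaW G w c U 𝒲 i A : ℝ) / (kappa G w c U i A : ℝ)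
          * ((gfun G w U i A : ℝ) - (2 : ℝ) ^ i)
        ≤ (gW G w U 𝒲 i A : ℝ) + (2 : ℝ) ^ i := by
    intro m
    induction m with
    | zero =>
      intro i hi hip A hA hκpos
      by_cases hAW : (A, i) ∈ 𝒲
      · exact goal_trivial G w c U 𝒲 i A hκpos (Or.inr (MSet_of_mem G w U hRP hAW))
      · refine goal_trivial G w c U 𝒲 i A hκpos (Or.inl (MSet_trivial G w U hRP hA hAW ?_))
        intro x hx hlt
        have hxl := (hRP.levels x hx).1
        intro _
        omega
    | succ n ih =>
      intro i hi hip A hA hκpos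
      have hi0 : (0:ℤ) ≤ i := by omega
      by_cases hAW : (A, i) ∈ 𝒲
      · exact goal_trivial G w c U 𝒲 i A hκpos (Or.inr (MSet_of_mem G w U hRP hAW))
      rcases hEff i hi0 hip A hA with hno |
        ⟨hall, h, Q, s, hQinj, hQcov, hsort, hsh, hmem, hnmem, hlow⟩
      · exact goal_trivial G w c U 𝒲 i A hκpos (Or.inl (MSet_trivial G w U hRP hA hAW hno))
      -- children facts
      have hQparts : ∀ k, Q k ∈ G.parts (Ele w (i-1) \ U) :=
        fun k => ((hQcov (Q k)).mpr ⟨k, rfl⟩).1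
      have hQsub : ∀ k, Q k ⊆ A := fun k => ((hQcov (Q k)).mpr ⟨k, rfl⟩).2
      have hQdisj : ∀ j k : Fin h, j ≠ k → Disjoint (Q j) (Q k) := fun j k hjk =>
        parts_disjoint G (hQparts j) (hQparts k) (fun he => hjk (hQinj he))
      have hQcov' : ∀ v ∈ A, ∃ k, v ∈ Q k := by
        intro v hv
        obtain ⟨k, hk⟩ := (hQcov (G.component (Ele w (i-1) \ U) v)).mp
          ⟨⟨v, rfl⟩, component_subset_of_mem G hA
            (Set.diff_subset_diff_left (Ele_mono w (by omega))) hv⟩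
        exact ⟨k, by rw [hk]; exact mem_component_self G _ v⟩
      have hF1 : ∑ k : Fin h, kappa G w c U (i-1) (Q k) ≤ kappa G w c U i A :=
        sum_kappa_children_le G w c U hQdisj hQsub hQcov'
      have hF2 : gfun G w U i A = 2 ^ i.toNat + ∑ k : Fin h, gfun G w U (i-1) (Q k) :=
        gfun_split G w U hi0 hA hQparts hQdisj hQsub hQcov'
      have h2i : (0:ℝ) < (2:ℝ) ^ i := zpow_pos (by norm_num) i
      have h2nat : ((2:ℕ) ^ i.toNat : ℝ) = (2:ℝ) ^ i := by
        push_cast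
        rw [← zpow_natCast (2:ℝ) i.toNat]
        congr 1
        omega
      by_cases hs : s < h
      · -- main case
        have hQs := hQparts ⟨s, hs⟩
        have hMeq : MSet 𝒲 i A
            = (fun k : Fin h => (Q k, i-1)) '' {k : Fin h | (k:ℕ) < s}
              ∪ MSet 𝒲 (i-1) (Q ⟨s, hs⟩) := by
          ext x
          constructor
          · rintro ⟨hx𝒲, hxA, hxi⟩
            rcases (show x.2 = i ∨ x.2 = i-1 ∨ x.2 ≤ i-2 by omega) with h2 | h2 | h2
            · exfalso
              have hxparts := hRP.parts x hx𝒲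
              rw [h2] at hxparts
              have hx1 : x.1 = A := parts_subset_eq G hxparts hA hxA
              have hxe : x = (A, i) := by rw [Prod.ext_iff]; exact ⟨hx1, h2⟩
              rw [hxe] at hx𝒲
              exact hAW hx𝒲
            · have hxparts := hRP.parts x hx𝒲
              rw [h2] at hxparts
              obtain ⟨k, hk⟩ := (hQcov x.1).mp ⟨hxparts, hxA⟩
              have hxeq : (Q k, i-1) = x := by rw [Prod.ext_iff]; exact ⟨hk, h2.symm⟩
              have hks : (k:ℕ) < s := by
                by_contra hge
                exact hnmem k (by omega) (by rw [hxeq]; exact hx𝒲)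
              exact Or.inl ⟨k, hks, hxeq⟩
            · obtain ⟨hs', hsub'⟩ := hlow x hx𝒲 h2
              exact Or.inr ⟨hx𝒲, hsub', by omega⟩
          · rintro (⟨k, hks, rfl⟩ | ⟨hx𝒲, hxQs, hxi⟩)
            · exact ⟨hmem k hks, hQsub k, by change i - 1 ≤ i; omega⟩
            · exact ⟨hx𝒲, hxQs.trans (hQsub ⟨s, hs⟩), by omega⟩
        have hMdisj : Disjoint ((fun k : Fin h => (Q k, i-1)) '' {k : Fin h | (k:ℕ) < s})
            (MSet 𝒲 (i-1) (Q ⟨s, hs⟩)) := by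
          rw [Set.disjoint_left]
          rintro x ⟨k, hks, rfl⟩ ⟨hx𝒲, hxQs, _⟩
          have heq : Q k = Q ⟨s, hs⟩ := parts_subset_eq G (hQparts k) hQs hxQs
          have hke : k = ⟨s, hs⟩ := hQinj heq
          rw [hke] at hks
          simp at hks
        have hsplit : ∀ F : Set V × ℤ → ℕ,
            ∑ᶠ x ∈ MSet 𝒲 i A, F x
              = (∑ k ∈ Finset.univ.filter (fun k : Fin h => (k:ℕ) < s), F (Q k, i-1))
                + ∑ᶠ x ∈ MSet 𝒲 (i-1) (Q ⟨s, hs⟩), F x := by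
          intro F
          rw [hMeq, finsum_mem_union hMdisj ((Set.toFinite _).image _)
              (hRP.finite.subset (fun x hx => hx.1)),
            finsum_image_filter Q hQinj i F]
        have hKdec : kappaW G w c U 𝒲 i A
            = (∑ k ∈ Finset.univ.filter (fun k : Fin h => (k:ℕ) < s),
                kappa G w c U (i-1) (Q k))
              + kappaW G w c U 𝒲 (i-1) (Q ⟨s, hs⟩) := by
          rw [kappaW_eq, kappaW_eq]
          exact hsplit (fun x => kappa G w c U x.2 x.1)
        have hGdec : gW G w U 𝒲 i A
            = (∑ k ∈ Finset.univ.filter (fun k : Fin h => (k:ℕ) < s),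
                gfun G w U (i-1) (Q k))
              + gW G w U 𝒲 (i-1) (Q ⟨s, hs⟩) := by
          rw [gW_eq, gW_eq]
          exact hsplit (fun x => gfun G w U x.2 x.1)
        have hF6 : kappaW G w c U 𝒲 (i-1) (Q ⟨s, hs⟩)
            ≤ kappa G w c U (i-1) (Q ⟨s, hs⟩) := by
          rw [kappaW_eq,
            finsum_mem_eq_finite_toFinset_sum _ (hRP.finite.subset
              (fun x (hx : x ∈ MSet 𝒲 (i-1) (Q ⟨s, hs⟩)) => hx.1))]
          refine sum_kappa_le G w c U (i-1) (Q ⟨s, hs⟩) _ ?_ ?_ ?_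
          · intro x hx y hy hne
            rw [Set.Finite.mem_toFinset] at hx hy
            exact hRP.disjoint x hx.1 y hy.1 hne
          · intro x hx
            rw [Set.Finite.mem_toFinset] at hx
            exact hx.2.1
          · intro x hx
            rw [Set.Finite.mem_toFinset] at hx
            exact hx.2.2
        have hS1 : gfun G w U (i-1) (Q ⟨s, hs⟩)
              * (∑ k ∈ Finset.univ.filter (fun k : Fin h => (k:ℕ) < s),
                  kappa G w c U (i-1) (Q k))
            ≤ (∑ k ∈ Finset.univ.filter (fun k : Fin h => (k:ℕ) < s),
                  gfun G w U (i-1) (Q k))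
              * kappa G w c U (i-1) (Q ⟨s, hs⟩) := by
          rw [Finset.mul_sum, Finset.sum_mul]
          refine Finset.sum_le_sum (fun j hj => ?_)
          have hjs : (j:ℕ) < s := (Finset.mem_filter.mp hj).2
          exact hsort j ⟨s, hs⟩ (by rw [Fin.le_def]; simp; omega)
        have hS3 : (∑ k ∈ Finset.univ.filter (fun k : Fin h => s < (k:ℕ)),
                gfun G w U (i-1) (Q k))
              * kappa G w c U (i-1) (Q ⟨s, hs⟩)
            ≤ gfun G w U (i-1) (Q ⟨s, hs⟩)
              * (∑ k ∈ Finset.univ.filter (fun k : Fin h => s < (k:ℕ)),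
                  kappa G w c U (i-1) (Q k)) := by
          rw [Finset.sum_mul, Finset.mul_sum]
          refine Finset.sum_le_sum (fun k hk => ?_)
          have hks : s < (k:ℕ) := (Finset.mem_filter.mp hk).2
          exact hsort ⟨s, hs⟩ k (by rw [Fin.le_def]; simp; omega)
        have hS2 : (∑ k ∈ Finset.univ.filter (fun k : Fin h => s < (k:ℕ)),
                gfun G w U (i-1) (Q k))
              * (∑ k ∈ Finset.univ.filter (fun k : Fin h => (k:ℕ) < s),
                  kappa G w c U (i-1) (Q k))
            ≤ (∑ k ∈ Finset.univ.filter (fun k : Fin h => (k:ℕ) < s),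
                  gfun G w U (i-1) (Q k))
              * (∑ k ∈ Finset.univ.filter (fun k : Fin h => s < (k:ℕ)),
                  kappa G w c U (i-1) (Q k)) := by
          rw [Finset.mul_sum, Finset.sum_mul]
          refine Finset.sum_le_sum (fun j hj => ?_)
          have hjs : (j:ℕ) < s := (Finset.mem_filter.mp hj).2
          rw [Finset.sum_mul, Finset.mul_sum]
          refine Finset.sum_le_sum (fun k hk => ?_)
          have hks : s < (k:ℕ) := (Finset.mem_filter.mp hk).2
          exact hsort j k (by rw [Fin.le_def]; omega)
        have hTk := sum_fin_split hs (fun k => kappa G w c U (i-1) (Q k))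
        have hTg := sum_fin_split hs (fun k => gfun G w U (i-1) (Q k))
        have hR7 : (kappaW G w c U 𝒲 (i-1) (Q ⟨s, hs⟩) : ℝ)
              * (gfun G w U (i-1) (Q ⟨s, hs⟩) : ℝ)
            ≤ ((gW G w U 𝒲 (i-1) (Q ⟨s, hs⟩) : ℝ) + (2:ℝ) ^ i)
              * (kappa G w c U (i-1) (Q ⟨s, hs⟩) : ℝ) := by
          have h2i2 : (2:ℝ) ^ i = 2 * (2:ℝ) ^ (i-1) := by
            have hz := zpow_add_one₀ (by norm_num : (2:ℝ) ≠ 0) (i-1)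
            rw [show i - 1 + 1 = i by ring] at hz
            rw [hz]; ring
          rw [h2i2]
          have := R7_of_IH (kappaW G w c U 𝒲 (i-1) (Q ⟨s, hs⟩))
            (gfun G w U (i-1) (Q ⟨s, hs⟩)) (kappa G w c U (i-1) (Q ⟨s, hs⟩))
            (gW G w U 𝒲 (i-1) (Q ⟨s, hs⟩)) ((2:ℝ) ^ (i-1))
            (zpow_pos (by norm_num) _) hF6
            (fun hpos => ih (i-1) (by omega) (by omega) (Q ⟨s, hs⟩) hQs hpos)
          linarith [this]
        refine key_ineq _ _ _ _ _ _ _ _ _ _ _ _ ((2:ℝ)^i) h2i hKdec hGdec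
          (by rw [← hTk]; exact hF1) hκpos ?_ hF6 hS1 hS2 hS3 hR7
        rw [hF2, hTg]
        push_cast [← h2nat]
        ring
      · -- s = h : all children belong to 𝒲
        have hsh' : s = h := by omega
        have hfilter : Finset.univ.filter (fun k : Fin h => (k:ℕ) < s) = Finset.univ := by
          ext k
          simp only [Finset.mem_filter, Finset.mem_univ, true_and, iff_true]
          omega
        have hMeq : MSet 𝒲 i A
            = (fun k : Fin h => (Q k, i-1)) '' {k : Fin h | (k:ℕ) < s} := by
          ext x
          constructor
          · rintro ⟨hx𝒲, hxA, hxi⟩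
            rcases (show x.2 = i ∨ x.2 = i-1 ∨ x.2 ≤ i-2 by omega) with h2 | h2 | h2
            · exfalso
              have hxparts := hRP.parts x hx𝒲
              rw [h2] at hxparts
              have hx1 : x.1 = A := parts_subset_eq G hxparts hA hxA
              have hxe : x = (A, i) := by rw [Prod.ext_iff]; exact ⟨hx1, h2⟩
              rw [hxe] at hx𝒲
              exact hAW hx𝒲
            · have hxparts := hRP.parts x hx𝒲
              rw [h2] at hxparts
              obtain ⟨k, hk⟩ := (hQcov x.1).mp ⟨hxparts, hxA⟩
              have hxeq : (Q k, i-1) = x := by rw [Prod.ext_iff]; exact ⟨hk, h2.symm⟩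
              have hks : (k:ℕ) < s := by have := k.isLt; omega
              exact ⟨k, hks, hxeq⟩
            · exfalso
              obtain ⟨hs', _⟩ := hlow x hx𝒲 h2
              omega
          · rintro ⟨k, hks, rfl⟩
            exact ⟨hmem k hks, hQsub k, by change i - 1 ≤ i; omega⟩
        have hKdec : kappaW G w c U 𝒲 i A = ∑ k : Fin h, kappa G w c U (i-1) (Q k) := by
          rw [kappaW_eq, hMeq, finsum_image_filter Q hQinj i
            (fun x => kappa G w c U x.2 x.1), hfilter]
        have hGdec : gW G w U 𝒲 i A = ∑ k : Fin h, gfun G w U (i-1) (Q k) := by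
          rw [gW_eq, hMeq, finsum_image_filter Q hQinj i
            (fun x => gfun G w U x.2 x.1), hfilter]
        refine key_ineq_full _ _ _ _ _ _ ((2:ℝ)^i) h2i hKdec hGdec hF1 hκpos ?_
        rw [hF2]
        push_cast [← h2nat]
        ring

  exact H (i + 1).toNat i (by omega) hiu A hA hκ

end Patterns

end MSTInterdiction
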